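/- Let μ : [K] → ℝ with a unique maximizer a*, and let w be in the open simplex with positive σ : [K] → ℝ. Then inf over (v : [K] → ℝ) such that argmax v ≠ a* of Σ_{a∈[K]} w(a)(v(a) - μ(a))²/(2σ(a)²) equals min_{a ≠ a*} (μ(a*) - μ(a))² / (2(σ(a*)²/w(a*) + σ(a)²/w(a))). -/

import Mathlib

lemma key_ineq (c d s u v : ℝ) (hc : 0 < c) (hd : 0 < d) (hs : 0 ≤ s) (h : s ≤ u + v) :
    s ^ 2 / (1 / c + 1 / d) ≤ c * u ^ 2 + d * v ^ 2 := by
  have h1 : s ^ 2 ≤ (u + v) ^ 2 := by nlinarith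
  have key : s ^ 2 * (c * d) ≤ (c * u ^ 2 + d * v ^ 2) * (c + d) := by
    nlinarith [sq_nonneg (c * u - d * v), mul_pos hc hd]
  have hrw : s ^ 2 / (1 / c + 1 / d) = s ^ 2 * (c * d) / (c + d) := by
    rw [div_add_div _ _ hc.ne' hd.ne', div_div_eq_mul_div, one_mul, mul_one, add_comm d c]
  rw [hrw, div_le_iff₀ (by positivity)]
  exact key

lemma pair_value (p q s t m1 m2 : ℝ) (hp : 0 < p) (hq : 0 < q) (hs : 0 < s) (ht : 0 < t) :
    p * ((p / (2 * s ^ 2) * m1 + q / (2 * t ^ 2) * m2) / (p / (2 * s ^ 2) + q / (2 * t ^ 2)) - m1) ^ 2 / (2 * s ^ 2)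
      + q * ((p / (2 * s ^ 2) * m1 + q / (2 * t ^ 2) * m2) / (p / (2 * s ^ 2) + q / (2 * t ^ 2)) - m2) ^ 2 / (2 * t ^ 2)
      = (m1 - m2) ^ 2 / (2 * (s ^ 2 / p + t ^ 2 / q)) := by
  have hden : 0 < p / (2 * s ^ 2) + q / (2 * t ^ 2) := by positivity
  field_simp
  ring

/-- Reduction of the alternative-hypothesis optimization to pairwise comparisons:
the infimum over mean vectors `v` under which some arm other than `a*` is weakly best of
`Σ_a w(a)(v(a)-μ(a))²/(2σ(a)²)` equals
`min_{a≠a*} (μ(a*)-μ(a))²/(2(σ(a*)²/w(a*) + σ(a)²/w(a)))`. -/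
theorem alt_hypothesis_reduction (K : ℕ) (hK : 2 ≤ K) (μ : Fin K → ℝ) (astar : Fin K)
    (hmax : ∀ a, a ≠ astar → μ a < μ astar)
    (σ : Fin K → ℝ) (hσ : ∀ a, 0 < σ a)
    (w : Fin K → ℝ) (hw : ∀ a, 0 < w a) (hsum : (∑ a, w a) = 1) :
    sInf {z : ℝ | ∃ v : Fin K → ℝ, (∃ a, a ≠ astar ∧ v astar ≤ v a) ∧
        z = ∑ a, w a * (v a - μ a) ^ 2 / (2 * σ a ^ 2)}
      = ⨅ a : {a : Fin K // a ≠ astar},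
          (μ astar - μ (a : Fin K)) ^ 2 /
            (2 * (σ astar ^ 2 / w astar + σ (a : Fin K) ^ 2 / w a)) := by
  classical
  obtain ⟨a₁, ha₁⟩ : ∃ b : Fin K, b ≠ astar :=
    Fintype.exists_ne_of_one_lt_card (by simpa using (show 1 < K by omega)) astar
  haveI : Nonempty {a : Fin K // a ≠ astar} := ⟨⟨a₁, ha₁⟩⟩
  set g : Fin K → ℝ := fun a =>
    (μ astar - μ a) ^ 2 / (2 * (σ astar ^ 2 / w astar + σ a ^ 2 / w a)) with hg
  set S : Set ℝ := {z : ℝ | ∃ v : Fin K → ℝ, (∃ a, a ≠ astar ∧ v astar ≤ v a) ∧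
      z = ∑ a, w a * (v a - μ a) ^ 2 / (2 * σ a ^ 2)} with hSdef
  have hGrw : (⨅ a : {a : Fin K // a ≠ astar},
        (μ astar - μ (a : Fin K)) ^ 2 /
          (2 * (σ astar ^ 2 / w astar + σ (a : Fin K) ^ 2 / w a)))
      = ⨅ a : {a : Fin K // a ≠ astar}, g (a : Fin K) := rfl
  rw [hGrw]
  -- membership: each pairwise value g a is attained in S
  have hmem : ∀ a : Fin K, a ≠ astar → g a ∈ S := by
    intro a ha
    set c1 : ℝ := w astar / (2 * σ astar ^ 2) with hc1
    set c2 : ℝ := w a / (2 * σ a ^ 2) with hc2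
    set x : ℝ := (c1 * μ astar + c2 * μ a) / (c1 + c2) with hx
    refine ⟨fun b => if b = astar ∨ b = a then x else μ b, ⟨a, ha, ?_⟩, ?_⟩
    · simp
    · have hzero : ∀ b ∈ Finset.univ, b ∉ ({astar, a} : Finset (Fin K)) →
          w b * ((if b = astar ∨ b = a then x else μ b) - μ b) ^ 2 / (2 * σ b ^ 2) = 0 := by
        intro b _ hb
        simp only [Finset.mem_insert, Finset.mem_singleton, not_or] at hb
        rw [if_neg (by tauto)]
        simp
      rw [← Finset.sum_subset (Finset.subset_univ ({astar, a} : Finset (Fin K))) hzero,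
        Finset.sum_pair (Ne.symm ha)]
      rw [if_pos (Or.inl rfl), if_pos (Or.inr rfl), hg]
      exact (pair_value (w astar) (w a) (σ astar) (σ a) (μ astar) (μ a)
        (hw astar) (hw a) (hσ astar) (hσ a)).symm
  have hSne : S.Nonempty := ⟨g a₁, hmem a₁ ha₁⟩
  have hSbdd : BddBelow S := by
    refine ⟨0, fun z hz => ?_⟩
    obtain ⟨v, _, rfl⟩ := hz
    refine Finset.sum_nonneg fun b _ => ?_
    have h1 := hw b
    have h2 := hσ b
    positivity
  have hIbdd : BddBelow (Set.range fun a : {a : Fin K // a ≠ astar} => g (a : Fin K)) :=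
    (Set.finite_range _).bddBelow
  -- lower bound: every element of S dominates some pairwise value
  have hlb : ∀ z ∈ S, (⨅ a : {a : Fin K // a ≠ astar}, g (a : Fin K)) ≤ z := by
    rintro z ⟨v, ⟨a, ha, hva⟩, rfl⟩
    refine le_trans (ciInf_le hIbdd ⟨a, ha⟩) ?_
    have hsum_ge : w astar * (v astar - μ astar) ^ 2 / (2 * σ astar ^ 2)
        + w a * (v a - μ a) ^ 2 / (2 * σ a ^ 2)
        ≤ ∑ b, w b * (v b - μ b) ^ 2 / (2 * σ b ^ 2) := by
      have hpair := Finset.sum_pair (f := fun b => w b * (v b - μ b) ^ 2 / (2 * σ b ^ 2))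
        (Ne.symm ha)
      rw [← hpair]
      refine Finset.sum_le_sum_of_subset_of_nonneg (Finset.subset_univ _) ?_
      intro b _ _
      have h1 := hw b
      have h2 := hσ b
      positivity
    refine le_trans ?_ hsum_ge
    have hs0 : 0 ≤ μ astar - μ a := le_of_lt (sub_pos.2 (hmax a ha))
    have hws := hw astar
    have hwa := hw a
    have hσs := hσ astar
    have hσa := hσ a
    have h := key_ineq (w astar / (2 * σ astar ^ 2)) (w a / (2 * σ a ^ 2))
      (μ astar - μ a) (μ astar - v astar) (v a - μ a)
      (by positivity) (by positivity) hs0 (by linarith)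
    have e1 : (μ astar - μ a) ^ 2 /
        (1 / (w astar / (2 * σ astar ^ 2)) + 1 / (w a / (2 * σ a ^ 2))) = g a := by
      rw [hg, one_div_div, one_div_div]
      congr 1
      ring
    have e2 : (w astar / (2 * σ astar ^ 2)) * (μ astar - v astar) ^ 2
        + (w a / (2 * σ a ^ 2)) * (v a - μ a) ^ 2
        = w astar * (v astar - μ astar) ^ 2 / (2 * σ astar ^ 2)
          + w a * (v a - μ a) ^ 2 / (2 * σ a ^ 2) := by ring
    rw [e1, e2] at h
    exact h
  refine le_antisymm ?_ (le_csInf hSne hlb)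
  refine le_ciInf fun a => ?_
  exact csInf_le hSbdd (hmem a a.2)
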